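/- Let X ⊂ ℝⁿ be a regular convex set and f a projectively self-concordant barrier on X. Then ⟨f'(x), y − x⟩ < 1 for all x, y in the interior of X. -/

import Mathlib

open Filter

variable {E : Type*} [NormedAddCommGroup E] [NormedSpace ℝ E]

/-- A regular convex set: closed, convex, with nonempty interior, containing no lines. -/
def IsRegularConvex (X : Set E) : Prop :=
  IsClosed X ∧ Convex ℝ X ∧ (interior X).Nonempty ∧
    ∀ x d : E, d ≠ 0 → ¬ (∀ t : ℝ, x + t • d ∈ X)

/-- Affine metric `G(x)[h,h] = f''(x)[h,h] - (f'(x)[h])²`. -/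
noncomputable def affMetric (f : E → ℝ) (x h : E) : ℝ :=
  iteratedFDeriv ℝ 2 f x (fun _ => h) - (fderiv ℝ f x h)^2

/-- Cubic form `C(x)[h,h,h]`. -/
noncomputable def cubicForm (f : E → ℝ) (x h : E) : ℝ :=
  iteratedFDeriv ℝ 3 f x (fun _ => h)
    - 6 * iteratedFDeriv ℝ 2 f x (fun _ => h) * fderiv ℝ f x h
    + 4 * (fderiv ℝ f x h)^3

/-- Projectively self-concordant barrier with parameter γ on X. -/
def IsPSCBarrier (X : Set E) (f : E → ℝ) (γ : ℝ) : Prop :=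
  ContDiffOn ℝ 3 f (interior X) ∧
  (∀ x ∈ interior X, ∀ h : E, h ≠ 0 → 0 < affMetric f x h) ∧
  (∀ x ∈ frontier X, Tendsto f (nhdsWithin x (interior X)) atTop) ∧
  (∀ x ∈ interior X, ∀ h : E, |cubicForm f x h| ≤ 2 * γ * (affMetric f x h) ^ ((3:ℝ)/2))

/-- `σ_x(h) = inf { 1/t : t > 0, x + t•h ∈ X }`. -/
noncomputable def sigmaDist (X : Set E) (x h : E) : ℝ :=
  sInf {r : ℝ | ∃ t : ℝ, 0 < t ∧ x + t • h ∈ X ∧ r = 1/t}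

section aux
open Set
variable {E : Type*} [NormedAddCommGroup E] [NormedSpace ℝ E]

/-- Key lemma: along a segment between interior points, the tangent inequality holds. -/
lemma key_aux {X : Set E} (hXc : Convex ℝ X)
    (f : E → ℝ) (hC : ContDiffOn ℝ 3 f (interior X))
    (hpos : ∀ x ∈ interior X, ∀ h : E, h ≠ 0 →
      0 < iteratedFDeriv ℝ 2 f x (fun _ => h) - (fderiv ℝ f x h)^2)
    {x y : E} (hx : x ∈ interior X) (hy : y ∈ interior X) :
    fderiv ℝ f x (y - x) < 1 := by
  rcases eq_or_ne y x with rfl | hne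
  · simp
  set h : E := y - x with hh
  have hne' : h ≠ 0 := sub_ne_zero.mpr hne
  set c : ℝ → E := fun t => x + t • h with hc
  have hmem : ∀ t ∈ Icc (0:ℝ) 1, c t ∈ interior X := by
    intro t ht
    have := (hXc.interior) hx hy (by linarith [ht.2] : (0:ℝ) ≤ 1 - t) ht.1 (by ring)
    convert this using 1
    simp only [hc, hh]
    module
  have hcd : ∀ t : ℝ, HasDerivAt c h t := fun t => by
    simpa [hc] using ((hasDerivAt_id t).smul_const h).const_add x
  -- differentiability facts at points of the segment
  have hCat : ∀ t ∈ Icc (0:ℝ) 1, ContDiffAt ℝ 3 f (c t) := fun t ht =>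
    hC.contDiffAt (isOpen_interior.mem_nhds (hmem t ht))
  set D1 : ℝ → ℝ := fun t => fderiv ℝ f (c t) h with hD1
  set g : ℝ → ℝ := fun t => Real.exp (-(f (c t))) with hg
  set G : ℝ → ℝ := fun t => -(D1 t) * g t with hG
  -- derivative of g
  have hgd : ∀ t ∈ Icc (0:ℝ) 1, HasDerivAt g (G t) t := by
    intro t ht
    have hdf : DifferentiableAt ℝ f (c t) :=
      (hCat t ht).differentiableAt (by norm_num)
    have h1 : HasDerivAt (fun s => f (c s)) (D1 t) t :=
      (hdf.hasFDerivAt).comp_hasDerivAt t (hcd t)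
    have := (h1.neg).exp
    simpa [hG, hg, mul_comm] using this
  -- derivative of G
  have hGd : ∀ t ∈ Icc (0:ℝ) 1,
      HasDerivAt G (((D1 t)^2 - fderiv ℝ (fderiv ℝ f) (c t) h h) * g t) t := by
    intro t ht
    have hdf2 : DifferentiableAt ℝ (fderiv ℝ f) (c t) := by
      have : ContDiffAt ℝ 2 (fderiv ℝ f) (c t) :=
        (hCat t ht).fderiv_right (by norm_num)
      exact this.differentiableAt (by norm_num)
    have h2 : HasDerivAt (fun s => fderiv ℝ f (c s)) (fderiv ℝ (fderiv ℝ f) (c t) h) t :=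
      (hdf2.hasFDerivAt).comp_hasDerivAt t (hcd t)
    have h3 : HasDerivAt D1 (fderiv ℝ (fderiv ℝ f) (c t) h h) t := by
      have := ((ContinuousLinearMap.apply ℝ ℝ h).hasFDerivAt).comp_hasDerivAt t h2
      simpa [hD1, Function.comp_def] using this
    have h4 := (h3.neg).mul (hgd t ht)
    convert h4 using 1
    · rfl
    · rfl
    · rfl
    simp only [hG, hD1, hg, Pi.neg_apply]
    ring
  -- the derivative of G is negative on the segment
  have hGneg : ∀ t ∈ Icc (0:ℝ) 1,
      ((D1 t)^2 - fderiv ℝ (fderiv ℝ f) (c t) h h) * g t < 0 := by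
    intro t ht
    have hp := hpos (c t) (hmem t ht) h hne'
    rw [iteratedFDeriv_two_apply] at hp
    have : (D1 t)^2 - fderiv ℝ (fderiv ℝ f) (c t) h h < 0 := by
      simp only [hD1]; linarith [hp]
    exact mul_neg_of_neg_of_pos this (Real.exp_pos _)
  -- G is strictly decreasing on [0,1]
  have hGanti : StrictAntiOn G (Icc (0:ℝ) 1) := by
    apply strictAntiOn_of_deriv_neg (convex_Icc 0 1)
    · exact fun t ht => ((hGd t ht).differentiableAt).continuousAt.continuousWithinAt
    · intro t ht
      rw [interior_Icc] at ht
      have ht' : t ∈ Icc (0:ℝ) 1 := ⟨le_of_lt ht.1, le_of_lt ht.2⟩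
      rw [(hGd t ht').deriv]
      exact hGneg t ht'
  -- mean value theorem for g on [0,1]
  have hgc : ContinuousOn g (Icc 0 1) := fun t ht =>
    ((hgd t ht).differentiableAt).continuousAt.continuousWithinAt
  obtain ⟨ξ, hξ, hξeq⟩ := exists_hasDerivAt_eq_slope g G (by norm_num : (0:ℝ) < 1) hgc
    (fun t ht => hgd t (Ioo_subset_Icc_self ht))
  have hξIcc : ξ ∈ Icc (0:ℝ) 1 := Ioo_subset_Icc_self hξ
  have h0 : (0:ℝ) ∈ Icc (0:ℝ) 1 := ⟨le_refl 0, by norm_num⟩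
  have hlt : G ξ < G 0 := hGanti h0 hξIcc hξ.1
  have hslope : G ξ = g 1 - g 0 := by rw [hξeq]; ring
  have hg1 : 0 < g 1 := Real.exp_pos _
  have hg0 : 0 < g 0 := Real.exp_pos _
  have hG0 : G 0 = -(D1 0) * g 0 := rfl
  have : g 1 - g 0 < -(D1 0) * g 0 := by rw [← hslope, ← hG0]; exact hlt
  have hfinal : D1 0 * g 0 < g 0 := by nlinarith
  have hD1lt : D1 0 < 1 := by
    have := lt_of_mul_lt_mul_right (by linarith : D1 0 * g 0 < 1 * g 0) hg0.le
    linarith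
  have hc0 : c 0 = x := by simp [hc]
  simpa [hD1, hc0, hh] using hD1lt

end aux

theorem stmt_10 {n : ℕ} (X : Set (EuclideanSpace ℝ (Fin n)))
    (hX : IsRegularConvex X) (ν : ℝ) (hν : 2 ≤ ν)
    (f : EuclideanSpace ℝ (Fin n) → ℝ)
    (hf : IsPSCBarrier X f ((ν - 2)/Real.sqrt (ν - 1))) :
    ∀ x ∈ interior X, ∀ y ∈ interior X, fderiv ℝ f x (y - x) < 1 := by
  intro x hx y hy
  exact key_aux hX.2.1 f hf.1 (fun z hz h hne => hf.2.1 z hz h hne) hx hy
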